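/- Let Q be the equioriented A₃ quiver 1 ← 2 ← 3. Then in the completed quantum algebra Â_Q one has E(y_{α₁})·E(y_{α₂})·E(y_{α₃}) = E(y_{α₁})·E(y_{α₃})·E(y_{α₂+α₃})·E(y_{α₂}), where α_i = e_i. -/

import Mathlib

open scoped BigOperators

/-- A quiver on vertex set `Fin n` with `m` arrows, each arrow `a` having a
tail `ta a` and a head `ha a`. -/
structure Quiv (n : ℕ) where
  m : ℕ
  ta : Fin m → Fin n
  ha : Fin m → Fin n

namespace Quiv

variable {n : ℕ}

/-- Coerce a dimension vector in `ℕⁿ` to `ℤⁿ`. -/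
def toZ {n : ℕ} (γ : Fin n → ℕ) : Fin n → ℤ := fun i => (γ i : ℤ)

/-- The Euler form of the subquiver with vertex set `V` and arrow set `A`. -/
def chiSub (Q : Quiv n) (V : Finset (Fin n)) (A : Finset (Fin Q.m))
    (γ₁ γ₂ : Fin n → ℤ) : ℤ :=
  (∑ i ∈ V, γ₁ i * γ₂ i) - ∑ a ∈ A, γ₁ (Q.ta a) * γ₂ (Q.ha a)

/-- The Euler form `χ` of `Q`. -/
def chi (Q : Quiv n) (γ₁ γ₂ : Fin n → ℤ) : ℤ :=
  Q.chiSub Finset.univ Finset.univ γ₁ γ₂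

/-- `λ(γ₁,γ₂) = χ(γ₂,γ₁) − χ(γ₁,γ₂)`, the antisymmetrized Euler form. -/
def lam (Q : Quiv n) (γ₁ γ₂ : Fin n → ℤ) : ℤ := Q.chi γ₂ γ₁ - Q.chi γ₁ γ₂

/-- `λ_A`, the restriction of `λ` to a subset `A` of the arrows. -/
def lamA (Q : Quiv n) (A : Finset (Fin Q.m)) (γ₁ γ₂ : Fin n → ℤ) : ℤ :=
  ∑ a ∈ A, (γ₁ (Q.ta a) * γ₂ (Q.ha a) - γ₂ (Q.ta a) * γ₁ (Q.ha a))

/-- No directed cycle using only arrows from `A`. -/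
def AcyclicOn (Q : Quiv n) (A : Finset (Fin Q.m)) : Prop :=
  ¬ ∃ (k : ℕ) (c : ZMod (k + 1) → Fin Q.m),
      (∀ i, c i ∈ A) ∧ ∀ i, Q.ha (c i) = Q.ta (c (i + 1))

/-- The quiver `Q` is acyclic: it has no directed cycle. -/
def Acyclic (Q : Quiv n) : Prop := Q.AcyclicOn Finset.univ

/-- Undirected adjacency via an arrow from `A`. -/
def AdjOn (Q : Quiv n) (A : Finset (Fin Q.m)) (x y : Fin n) : Prop :=
  ∃ a ∈ A, (Q.ta a = x ∧ Q.ha a = y) ∨ (Q.ta a = y ∧ Q.ha a = x)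

/-- The subquiver `(V, A)` is connected as an undirected graph. -/
def ConnectedOn (Q : Quiv n) (V : Finset (Fin n)) (A : Finset (Fin Q.m)) : Prop :=
  ∀ x ∈ V, ∀ y ∈ V, Relation.ReflTransGen (Q.AdjOn A) x y

/-- The Tits form of the subquiver `(V,A)` is positive definite. -/
def PosDefOn (Q : Quiv n) (V : Finset (Fin n)) (A : Finset (Fin Q.m)) : Prop :=
  ∀ γ : Fin n → ℤ, (∀ i, i ∉ V → γ i = 0) → γ ≠ 0 → 0 < Q.chiSub V A γ γ

/-- The subquiver `(V,A)` is a (nonempty, connected, acyclic, positive-definite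
Tits form) Dynkin quiver. -/
def DynkinOn (Q : Quiv n) (V : Finset (Fin n)) (A : Finset (Fin Q.m)) : Prop :=
  V.Nonempty ∧ (∀ a ∈ A, Q.ta a ∈ V ∧ Q.ha a ∈ V) ∧
    Q.ConnectedOn V A ∧ Q.AcyclicOn A ∧ Q.PosDefOn V A

/-- The set of positive roots of the subquiver `(V,A)`: nonzero dimension
vectors supported on `V` with `χ(β,β) = 1`. -/
def PosRootsOn (Q : Quiv n) (V : Finset (Fin n)) (A : Finset (Fin Q.m)) :
    Set (Fin n → ℕ) :=
  {β | β ≠ 0 ∧ (∀ i, i ∉ V → β i = 0) ∧ Q.chiSub V A (toZ β) (toZ β) = 1}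

/-- A Dynkin subquiver partition `Q• = {Q¹,…,Q^ℓ}` of `Q`: each block is a
subquiver `(V j, A j)`, the vertex sets partition `Q₀`, and each block is a
nonempty connected Dynkin quiver. -/
structure DSP (Q : Quiv n) (ℓ : ℕ) where
  V : Fin ℓ → Finset (Fin n)
  A : Fin ℓ → Finset (Fin Q.m)
  cover : ∀ i : Fin n, ∃! j, i ∈ V j
  dynkin : ∀ j, Q.DynkinOn (V j) (A j)

/-- Arrows of `Q` not belonging to any block, i.e. arrows of the contracted
quiver `P(Q,Q•)`. -/
def DSP.Cut {Q : Quiv n} {ℓ : ℕ} (P : DSP Q ℓ) (a : Fin Q.m) : Prop :=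
  ∀ j, a ∉ P.A j

/-- `Q•` is admissible: the contracted quiver `P(Q,Q•)` is acyclic, i.e. there
is no cyclic sequence of cut arrows in which the block of the head of each
arrow is the block of the tail of the next one. -/
def DSP.Admissible {Q : Quiv n} {ℓ : ℕ} (P : DSP Q ℓ) : Prop :=
  ¬ ∃ (k : ℕ) (c : ZMod (k + 1) → Fin Q.m),
      (∀ i, P.Cut (c i)) ∧
      ∀ i, ∃ j : Fin ℓ, Q.ha (c i) ∈ P.V j ∧ Q.ta (c (i + 1)) ∈ P.V j

/-- `Q•` is ordered: every cut arrow goes from a higher-indexed block (tail)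
to a lower-indexed block (head). -/
def DSP.Ordered {Q : Quiv n} {ℓ : ℕ} (P : DSP Q ℓ) : Prop :=
  ∀ a : Fin Q.m, P.Cut a →
    ∀ j j' : Fin ℓ, Q.ha a ∈ P.V j → Q.ta a ∈ P.V j' → j < j'

/-- `Φ(Q,Q•) = ∪_j Φ^j`. -/
def DSP.Roots {Q : Quiv n} {ℓ : ℕ} (P : DSP Q ℓ) : Set (Fin n → ℕ) :=
  ⋃ j, Q.PosRootsOn (P.V j) (P.A j)

/-- An allowed total order `φ₁ ≺ ⋯ ≺ φ_r` on `Φ(Q,Q•)`: an enumeration such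
that for `u < v`, `λ(φ_u,φ_v) ≥ 0` if `φ_u, φ_v` lie in the same `Φ^j` and
`λ(φ_u,φ_v) ≤ 0` if they lie in different `Φ^j`'s. -/
def DSP.AllowedOrder {Q : Quiv n} {ℓ : ℕ} (P : DSP Q ℓ) {r : ℕ}
    (φ : Fin r → (Fin n → ℕ)) : Prop :=
  Function.Injective φ ∧ Set.range φ = P.Roots ∧
    ∀ u v : Fin r, u < v →
      ((∃ j, φ u ∈ Q.PosRootsOn (P.V j) (P.A j) ∧
          φ v ∈ Q.PosRootsOn (P.V j) (P.A j)) →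
        0 ≤ Q.lam (toZ (φ u)) (toZ (φ v))) ∧
      ((¬ ∃ j, φ u ∈ Q.PosRootsOn (P.V j) (P.A j) ∧
          φ v ∈ Q.PosRootsOn (P.V j) (P.A j)) →
        Q.lam (toZ (φ u)) (toZ (φ v)) ≤ 0)

end Quiv

noncomputable section

open Quiv

/-- The underlying vector space of the completed quantum algebra `Â_Q`:
functions from dimension vectors to `ℚ(t)`. -/
abbrev AQ (n : ℕ) := (Fin n → ℕ) → RatFunc ℚ

/-- The variable `t = q^{1/2}` of `ℚ(t)`. -/
def tq : RatFunc ℚ := RatFunc.X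

/-- The unit of `Â_Q`: the indicator function of the zero dimension vector. -/
def oneQ {n : ℕ} : AQ n := fun γ => if γ = 0 then 1 else 0

/-- The generator `y_γ = −δ_γ` of the quantum algebra. -/
def yQ {n : ℕ} (γ : Fin n → ℕ) : AQ n := fun δ => if δ = γ then -1 else 0

/-- The twisted convolution product of the quantum algebra:
`(f·g)(γ) = Σ_{γ₁+γ₂=γ} t^{λ(γ₁,γ₂)} f(γ₁) g(γ₂)`. -/
def mulQ {n : ℕ} (Q : Quiv n) (f g : AQ n) : AQ n := fun γ =>
  ∑ γ₁ ∈ Finset.Iic γ,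
    tq ^ (Q.lam (toZ γ₁) (toZ (γ - γ₁))) * f γ₁ * g (γ - γ₁)

/-- Ordered product of a list of elements of `Â_Q`. -/
def prodQ {n : ℕ} (Q : Quiv n) (L : List (AQ n)) : AQ n := L.foldr (mulQ Q) oneQ

/-- Power in the quantum algebra. -/
def powQ {n : ℕ} (Q : Quiv n) (f : AQ n) : ℕ → AQ n
  | 0 => oneQ
  | k + 1 => mulQ Q f (powQ Q f k)

/-- `P_k = Π_{j=1}^k (1 − q^j)⁻¹` with `q = t²`, the Poincaré series of
`H^*(BGL(k,ℂ))`. -/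
def Pq (k : ℕ) : RatFunc ℚ := ∏ j ∈ Finset.Icc 1 k, (1 - tq ^ (2 * j))⁻¹

/-- The quantum dilogarithm `E(y_γ) = 1 + Σ_{k≥1} (−1)^k t^{k²} P_k y_γ^k`,
written out as the function supported on the multiples `k • γ`,
with value `t^{k²} P_k` at `k • γ`  (note `y_γ^k = (−1)^k δ_{kγ}`). -/
def Edl {n : ℕ} (γ : Fin n → ℕ) : AQ n := fun δ =>
  ∑ k ∈ Finset.range ((∑ i, δ i) + 1),
    if δ = k • γ then tq ^ (k ^ 2) * Pq k else 0

end

/-- The equioriented `A₃` quiver `1 ← 2 ← 3` (vertices `0,1,2` of `Fin 3`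
standing for `1,2,3`): arrows `2 → 1` and `3 → 2`. -/
def QA3 : Quiv 3 := ⟨2, ![1, 2], ![0, 1]⟩


lemma tq_ne_zero : tq ≠ 0 := RatFunc.X_ne_zero

lemma one_sub_tq_pow_ne_zero (j : ℕ) (hj : 0 < j) : (1 : RatFunc ℚ) - tq ^ (2 * j) ≠ 0 := by
  have h : (1 : RatFunc ℚ) - tq ^ (2 * j)
      = algebraMap (Polynomial ℚ) (RatFunc ℚ) (1 - Polynomial.X ^ (2 * j)) := by
    rw [map_sub, map_one, map_pow]; rfl
  rw [h]
  apply RatFunc.algebraMap_ne_zero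
  intro h0
  have := congrArg (fun p => Polynomial.coeff p (2 * j)) h0
  simp [Polynomial.coeff_one, hj.ne'] at this

lemma Pq_succ (k : ℕ) : Pq (k + 1) = Pq k * (1 - tq ^ (2 * (k + 1)))⁻¹ := by
  unfold Pq
  rw [Finset.prod_Icc_succ_top (by omega)]

lemma Pq_succ' (k : ℕ) : Pq k = Pq (k + 1) * (1 - tq ^ (2 * (k + 1))) := by
  rw [Pq_succ, mul_assoc, inv_mul_cancel₀ (one_sub_tq_pow_ne_zero _ (by omega)), mul_one]

lemma pascalP (c k : ℕ) (hk1 : 1 ≤ k) (hkc : k ≤ c) :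
    (1 - tq ^ (2 * (c + 1))) * (Pq (c + 1 - k) * Pq k)
      = Pq (c - k) * Pq k + tq ^ (2 * (c + 1 - k)) * (Pq (c + 1 - k) * Pq (k - 1)) := by
  obtain ⟨c', rfl⟩ : ∃ c', c = k + c' := ⟨c - k, by omega⟩
  obtain ⟨k', rfl⟩ : ∃ k', k = k' + 1 := ⟨k - 1, by omega⟩
  simp only [show k' + 1 + c' + 1 - (k' + 1) = c' + 1 by omega,
    show k' + 1 + c' - (k' + 1) = c' by omega, Nat.add_sub_cancel]
  have h1 : Pq c' = Pq (c' + 1) * (1 - tq ^ (2 * (c' + 1))) := Pq_succ' c'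
  have h2 : Pq k' = Pq (k' + 1) * (1 - tq ^ (2 * (k' + 1))) := Pq_succ' k'
  have h3 : 2 * (k' + 1 + c' + 1) = 2 * (c' + 1) + 2 * (k' + 1) := by ring
  rw [h1, h2, h3, pow_add]
  ring

lemma key (b c : ℕ) :
    ∑ k ∈ Finset.range (c + 1), (if k ≤ b then
      tq ^ (2 * ((b - k) * (c - k))) * (Pq (b - k) * (Pq k * Pq (c - k))) else 0)
      = Pq b * Pq c := by
  induction c with
  | zero => simp [Pq]
  | succ c ih =>
    have hu : (1 - tq ^ (2 * (c + 1))) ≠ 0 := one_sub_tq_pow_ne_zero _ (by omega)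
    set A : ℕ → RatFunc ℚ := fun k => if k ≤ b ∧ k ≤ c then
      tq ^ (2 * ((b - k) * (c - k) + (b - k))) * (Pq (b - k) * (Pq k * Pq (c - k))) else 0 with hA
    set B : ℕ → RatFunc ℚ := fun k => if k ≤ b ∧ 1 ≤ k then
      tq ^ (2 * ((b - k) * (c + 1 - k) + (c + 1 - k))) * (Pq (b - k) * (Pq (k - 1) * Pq (c + 1 - k))) else 0 with hB
    have split : ∀ k ∈ Finset.range (c + 1 + 1),
        (1 - tq ^ (2 * (c + 1))) * (if k ≤ b then
          tq ^ (2 * ((b - k) * (c + 1 - k))) * (Pq (b - k) * (Pq k * Pq (c + 1 - k))) else 0)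
        = A k + B k := by
      intro k hk
      rw [Finset.mem_range] at hk
      by_cases hkb : k ≤ b
      · rcases Nat.eq_zero_or_pos k with rfl | hk1
        · -- k = 0
          simp only [hA, hB]
          rw [if_pos hkb, if_pos ⟨hkb, Nat.zero_le c⟩, if_neg (by omega), add_zero]
          simp only [Nat.sub_zero]
          have h1 : Pq c = Pq (c + 1) * (1 - tq ^ (2 * (c + 1))) := Pq_succ' c
          rw [show 2 * (b * c + b) = 2 * (b * (c + 1)) by ring, h1]
          ring
        · rcases Nat.lt_or_ge k (c + 1) with hkc | hkc
          · -- 1 ≤ k ≤ c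
            have hkc' : k ≤ c := by omega
            simp only [hA, hB]
            rw [if_pos hkb, if_pos ⟨hkb, hkc'⟩, if_pos ⟨hkb, hk1⟩]
            have hp := pascalP c k hk1 hkc'
            have e1 : 2 * ((b - k) * (c + 1 - k)) = 2 * ((b - k) * (c - k) + (b - k)) := by
              have : c + 1 - k = (c - k) + 1 := by omega
              rw [this]; ring
            have e2 : 2 * ((b - k) * (c + 1 - k) + (c + 1 - k))
                = 2 * ((b - k) * (c + 1 - k)) + 2 * (c + 1 - k) := by ring
            calc (1 - tq ^ (2 * (c + 1))) *
                (tq ^ (2 * ((b - k) * (c + 1 - k))) * (Pq (b - k) * (Pq k * Pq (c + 1 - k))))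
                = tq ^ (2 * ((b - k) * (c + 1 - k))) * Pq (b - k) *
                    ((1 - tq ^ (2 * (c + 1))) * (Pq (c + 1 - k) * Pq k)) := by ring
              _ = tq ^ (2 * ((b - k) * (c + 1 - k))) * Pq (b - k) *
                    (Pq (c - k) * Pq k + tq ^ (2 * (c + 1 - k)) * (Pq (c + 1 - k) * Pq (k - 1))) := by
                  rw [hp]
              _ = _ := by rw [e1, e2, pow_add, ← e1]; ring
          · -- k = c + 1
            have hk' : k = c + 1 := by omega
            subst hk'
            simp only [hA, hB]
            rw [if_pos hkb, if_neg (by omega), if_pos ⟨hkb, by omega⟩, zero_add]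
            simp only [Nat.sub_self, Nat.add_sub_cancel, Nat.mul_zero, Nat.zero_add,
              Nat.add_sub_cancel_left]
            have h1 : Pq c = Pq (c + 1) * (1 - tq ^ (2 * (c + 1))) := Pq_succ' c
            rw [h1]
            ring
      · simp only [hA, hB, if_neg hkb, if_neg (by tauto : ¬(k ≤ b ∧ k ≤ c)),
          if_neg (by tauto : ¬(k ≤ b ∧ 1 ≤ k)), mul_zero, add_zero]
    have main : (1 - tq ^ (2 * (c + 1))) *
        ∑ k ∈ Finset.range (c + 1 + 1), (if k ≤ b then
          tq ^ (2 * ((b - k) * (c + 1 - k))) * (Pq (b - k) * (Pq k * Pq (c + 1 - k))) else 0)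
        = Pq b * Pq c := by
      rw [Finset.mul_sum, Finset.sum_congr rfl split, Finset.sum_add_distrib]
      rw [Finset.sum_range_succ (f := A), Finset.sum_range_succ' B (c + 1)]
      have hAtop : A (c + 1) = 0 := by simp only [hA]; rw [if_neg (by omega)]
      have hB0 : B 0 = 0 := by simp only [hB]; rw [if_neg (by omega)]
      rw [hAtop, hB0, add_zero, add_zero, ← Finset.sum_add_distrib, ← ih]
      apply Finset.sum_congr rfl
      intro k hk
      rw [Finset.mem_range] at hk
      have hkc : k ≤ c := by omega
      by_cases hkb : k ≤ b
      · rcases Nat.lt_or_ge k b with hlt | hge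
        · -- k + 1 ≤ b
          simp only [hA, hB]
          rw [if_pos ⟨hkb, hkc⟩, if_pos ⟨by omega, by omega⟩, if_pos hkb]
          simp only [Nat.add_sub_cancel]
          obtain ⟨b', rfl⟩ : ∃ b', b = k + 1 + b' := ⟨b - (k + 1), by omega⟩
          obtain ⟨c', rfl⟩ : ∃ c', c = k + c' := ⟨c - k, by omega⟩
          simp only [show k + 1 + b' - k = b' + 1 by omega, show k + c' - k = c' by omega,
            show k + 1 + b' - (k + 1) = b' by omega, show k + c' + 1 - (k + 1) = c' by omega]
          have h1 : Pq b' = Pq (b' + 1) * (1 - tq ^ (2 * (b' + 1))) := Pq_succ' b'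
          rw [show 2 * ((b' + 1) * c' + (b' + 1)) = 2 * ((b' + 1) * c') + 2 * (b' + 1) by ring,
            show 2 * (b' * c' + c') = 2 * ((b' + 1) * c') by ring, pow_add, h1]
          ring
        · -- k = b
          have : k = b := by omega
          subst this
          simp only [hA, hB]
          rw [if_pos ⟨le_refl _, hkc⟩, if_neg (by omega), add_zero, if_pos (le_refl _)]
          simp only [Nat.sub_self]
          norm_num
      · simp only [hA, hB, if_neg (by tauto : ¬(k ≤ b ∧ k ≤ c)),
          if_neg (by omega : ¬(k + 1 ≤ b ∧ 1 ≤ k + 1)), if_neg hkb, add_zero]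
    have hPc1 : Pq b * Pq (c + 1) = (1 - tq ^ (2 * (c + 1)))⁻¹ * (Pq b * Pq c) := by
      rw [Pq_succ]; ring
    rw [hPc1, ← main]
    rw [← mul_assoc, inv_mul_cancel₀ hu, one_mul]

-- ===== auxiliary lemmas =====
open Quiv

instance piLeDecidable {n : ℕ} (γ δ : Fin n → ℕ) : Decidable (γ ≤ δ) :=
  decidable_of_iff (∀ i, γ i ≤ δ i) (by rw [Pi.le_def])

lemma toZ_apply {n : ℕ} (γ : Fin n → ℕ) (i : Fin n) : toZ γ i = (γ i : ℤ) := rfl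

lemma lam_QA3 (x y : Fin 3 → ℤ) :
    QA3.lam x y = x 1 * y 0 - x 0 * y 1 + x 2 * y 1 - x 1 * y 2 := by
  simp [Quiv.lam, Quiv.chi, Quiv.chiSub, QA3, Fin.sum_univ_three, Fin.sum_univ_two]
  erw [Fin.sum_univ_two, Fin.sum_univ_two]
  simp only [Matrix.cons_val_zero, Matrix.cons_val_one]
  ring

lemma lam_zero_right {n : ℕ} (Q : Quiv n) (x : Fin n → ℤ) : Q.lam x 0 = 0 := by
  simp [Quiv.lam, Quiv.chi, Quiv.chiSub]

lemma sub_self_nat {n : ℕ} (γ : Fin n → ℕ) : γ - γ = 0 := by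
  funext i; exact Nat.sub_self _

lemma toZ_zero {n : ℕ} : toZ (0 : Fin n → ℕ) = 0 := by
  funext i; rfl

lemma mulQ_oneQ {n : ℕ} (Q : Quiv n) (f : AQ n) : mulQ Q f oneQ = f := by
  funext δ
  unfold mulQ
  rw [Finset.sum_eq_single_of_mem δ (Finset.mem_Iic.2 le_rfl)]
  · rw [sub_self_nat, toZ_zero, lam_zero_right]
    simp [oneQ]
  · intro γ₁ hmem hne
    rw [Finset.mem_Iic] at hmem
    have : ¬ (δ - γ₁ = 0) := by
      intro h0
      apply hne
      funext i
      have h1 := congrFun h0 i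
      have h2 : γ₁ i ≤ δ i := hmem i
      simp only [Pi.sub_apply, Pi.zero_apply] at h1
      omega
    simp [oneQ, this]

lemma Edl_apply {n : ℕ} (γ : Fin n → ℕ) (i0 : Fin n) (h : γ i0 = 1) (δ : Fin n → ℕ) :
    Edl γ δ = if δ = δ i0 • γ then tq ^ ((δ i0) ^ 2) * Pq (δ i0) else 0 := by
  unfold Edl
  rw [Finset.sum_eq_single (δ i0)]
  · intro k _ hne
    rw [if_neg]
    intro h'
    apply hne
    have := congrFun h' i0
    simp [Pi.smul_apply, h] at this
    omega
  · intro hmem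
    exfalso
    apply hmem
    rw [Finset.mem_range]
    have : δ i0 ≤ ∑ i, δ i := Finset.single_le_sum (fun i _ => Nat.zero_le (δ i)) (Finset.mem_univ i0)
    omega

lemma mulQ_Edl {n : ℕ} (Q : Quiv n) (γ : Fin n → ℕ) (i0 : Fin n) (h : γ i0 = 1)
    (g : AQ n) (δ : Fin n → ℕ) :
    mulQ Q (Edl γ) g δ = ∑ k ∈ Finset.range (δ i0 + 1),
      if k • γ ≤ δ then
        tq ^ (Q.lam (toZ (k • γ)) (toZ (δ - k • γ))) * (tq ^ (k ^ 2) * Pq k) * g (δ - k • γ)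
      else 0 := by
  unfold mulQ
  have step : ∀ γ₁ ∈ Finset.Iic δ,
      tq ^ (Q.lam (toZ γ₁) (toZ (δ - γ₁))) * Edl γ γ₁ * g (δ - γ₁)
      = ∑ k ∈ Finset.range (δ i0 + 1), (if k • γ = γ₁ then
          (if k • γ ≤ δ then
            tq ^ (Q.lam (toZ (k • γ)) (toZ (δ - k • γ))) * (tq ^ (k ^ 2) * Pq k) * g (δ - k • γ)
          else 0) else 0) := by
    intro γ₁ hmem
    rw [Finset.mem_Iic] at hmem
    rw [Edl_apply γ i0 h]
    rw [Finset.sum_eq_single (γ₁ i0)]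
    · by_cases hc : γ₁ = γ₁ i0 • γ
      · rw [if_pos hc, if_pos hc.symm, if_pos (show γ₁ i0 • γ ≤ δ from hc ▸ hmem), ← hc]
      · rw [if_neg hc, if_neg (fun he => hc he.symm)]
        ring
    · intro k _ hne
      rw [if_neg]
      intro h'
      apply hne
      have := congrFun h' i0
      simp [Pi.smul_apply, h] at this
      omega
    · intro hmem'
      exfalso
      apply hmem'
      rw [Finset.mem_range]
      have : γ₁ i0 ≤ δ i0 := hmem i0
      omega
  rw [Finset.sum_congr rfl step, Finset.sum_comm]
  apply Finset.sum_congr rfl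
  intro k _
  rw [Finset.sum_ite_eq (Finset.Iic δ) (k • γ)]
  by_cases hle : k • γ ≤ δ
  · rw [if_pos (Finset.mem_Iic.2 hle)]
  · rw [if_neg (fun hmem => hle (Finset.mem_Iic.1 hmem)), if_neg hle]

@[simp] lemma cv0 (a b c : ℕ) : (![a, b, c] : Fin 3 → ℕ) 0 = a := rfl
@[simp] lemma cv1 (a b c : ℕ) : (![a, b, c] : Fin 3 → ℕ) 1 = b := rfl
@[simp] lemma cv2 (a b c : ℕ) : (![a, b, c] : Fin 3 → ℕ) 2 = c := rfl

/-- closed form for `Edl e₃`. -/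
lemma L3 (δ : Fin 3 → ℕ) :
    Edl ![0, 0, 1] δ = if δ 0 = 0 ∧ δ 1 = 0 then tq ^ (δ 2 ^ 2) * Pq (δ 2) else 0 := by
  rw [Edl_apply ![0, 0, 1] 2 rfl]
  by_cases hc : δ 0 = 0 ∧ δ 1 = 0
  · rw [if_pos hc, if_pos]
    funext i
    fin_cases i <;> simp [Pi.smul_apply, hc.1, hc.2]
  · rw [if_neg hc, if_neg]
    intro h
    exact hc ⟨by rw [h]; simp [Pi.smul_apply], by rw [h]; simp [Pi.smul_apply]⟩

/-- closed form for `Edl e₂`. -/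
lemma L2 (δ : Fin 3 → ℕ) :
    Edl ![0, 1, 0] δ = if δ 0 = 0 ∧ δ 2 = 0 then tq ^ (δ 1 ^ 2) * Pq (δ 1) else 0 := by
  rw [Edl_apply ![0, 1, 0] 1 rfl]
  by_cases hc : δ 0 = 0 ∧ δ 2 = 0
  · rw [if_pos hc, if_pos]
    funext i
    fin_cases i <;> simp [Pi.smul_apply, hc.1, hc.2]
  · rw [if_neg hc, if_neg]
    intro h
    exact hc ⟨by rw [h]; simp [Pi.smul_apply], by rw [h]; simp [Pi.smul_apply]⟩

/-- closed form for `E(y_{α₂})E(y_{α₃})`. -/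
lemma L23 (δ : Fin 3 → ℕ) :
    mulQ QA3 (Edl ![0, 1, 0]) (Edl ![0, 0, 1]) δ =
    if δ 0 = 0 then
      tq ^ (-((δ 1 : ℤ) * (δ 2 : ℤ))) *
        ((tq ^ (δ 1 ^ 2) * Pq (δ 1)) * (tq ^ (δ 2 ^ 2) * Pq (δ 2)))
    else 0 := by
  rw [mulQ_Edl QA3 ![0, 1, 0] 1 rfl]
  rw [Finset.sum_eq_single (δ 1)]
  · by_cases h0 : δ 0 = 0
    · rw [if_pos h0, if_pos]
      · rw [L3, if_pos]
        · have hl : QA3.lam (Quiv.toZ (δ 1 • ![0, 1, 0])) (Quiv.toZ (δ - δ 1 • ![0, 1, 0]))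
              = -((δ 1 : ℤ) * (δ 2 : ℤ)) := by
            rw [lam_QA3]
            simp only [toZ_apply, Pi.sub_apply, Pi.smul_apply, smul_eq_mul, cv0, cv1, cv2,
              mul_zero, mul_one, Nat.sub_zero, Nat.sub_self, Nat.cast_zero,
              show Matrix.vecHead δ = δ 0 from rfl,
              show Matrix.vecHead (Matrix.vecTail δ) = δ 1 from rfl,
              show Matrix.vecHead (Matrix.vecTail (Matrix.vecTail δ)) = δ 2 from rfl, h0]
            push_cast
            ring
          rw [hl]
          have h1 : (δ - δ 1 • ![0, 1, 0] : Fin 3 → ℕ) 2 = δ 2 := by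
            simp [Pi.sub_apply, Pi.smul_apply]
          rw [h1]
          ring
        · constructor <;> simp [Pi.sub_apply, Pi.smul_apply, h0]
      · intro i
        fin_cases i <;> simp [Pi.smul_apply]
    · rw [if_neg h0]
      split_ifs with hc
      · rw [L3, if_neg, mul_zero]
        rintro ⟨ha, -⟩
        simp [Pi.sub_apply, Pi.smul_apply] at ha
        exact h0 ha
      · rfl
  · intro k hk hne
    rw [Finset.mem_range] at hk
    split_ifs with hc
    · rw [L3, if_neg, mul_zero]
      rintro ⟨-, hb⟩
      simp [Pi.sub_apply, Pi.smul_apply] at hb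
      omega
    · rfl
  · intro h
    exfalso
    exact h (Finset.mem_range.2 (by omega))

/-- closed form for `E(y_{α₂+α₃})E(y_{α₂})`. -/
lemma L232 (δ : Fin 3 → ℕ) :
    mulQ QA3 (Edl ![0, 1, 1]) (Edl ![0, 1, 0]) δ =
    if δ 0 = 0 ∧ δ 2 ≤ δ 1 then
      tq ^ ((δ 2 : ℤ) * ((δ 1 - δ 2 : ℕ) : ℤ)) *
        ((tq ^ (δ 2 ^ 2) * Pq (δ 2)) * (tq ^ ((δ 1 - δ 2) ^ 2) * Pq (δ 1 - δ 2)))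
    else 0 := by
  rw [mulQ_Edl QA3 ![0, 1, 1] 1 rfl]
  rw [Finset.sum_eq_single (δ 2)]
  · by_cases hc : δ 0 = 0 ∧ δ 2 ≤ δ 1
    · rw [if_pos hc, if_pos]
      · rw [L2, if_pos]
        · have hl : QA3.lam (Quiv.toZ (δ 2 • ![0, 1, 1])) (Quiv.toZ (δ - δ 2 • ![0, 1, 1]))
              = (δ 2 : ℤ) * ((δ 1 - δ 2 : ℕ) : ℤ) := by
            rw [lam_QA3]
            simp only [toZ_apply, Pi.sub_apply, Pi.smul_apply, smul_eq_mul, cv0, cv1, cv2,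
              mul_zero, mul_one, Nat.sub_zero, Nat.sub_self, Nat.cast_zero,
              show Matrix.vecHead δ = δ 0 from rfl,
              show Matrix.vecHead (Matrix.vecTail δ) = δ 1 from rfl,
              show Matrix.vecHead (Matrix.vecTail (Matrix.vecTail δ)) = δ 2 from rfl, hc.1]
            push_cast
            ring
          rw [hl]
          have h1 : (δ - δ 2 • ![0, 1, 1] : Fin 3 → ℕ) 1 = δ 1 - δ 2 := by
            simp [Pi.sub_apply, Pi.smul_apply]
          rw [h1]
          ring
        · constructor <;> simp [Pi.sub_apply, Pi.smul_apply, hc.1]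
      · intro i
        fin_cases i <;> simp [Pi.smul_apply, hc.2]
    · rw [if_neg hc]
      split_ifs with hle
      · rw [L2, if_neg, mul_zero]
        rintro ⟨ha, -⟩
        simp [Pi.sub_apply, Pi.smul_apply] at ha
        have h1 : δ 2 * 1 ≤ δ 1 := by
          have := hle 1
          simpa [Pi.smul_apply] using this
        exact hc ⟨ha, by omega⟩
      · rfl
  · intro k hk hne
    rw [Finset.mem_range] at hk
    split_ifs with hle
    · rw [L2, if_neg, mul_zero]
      rintro ⟨-, hb⟩
      simp [Pi.sub_apply, Pi.smul_apply] at hb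
      have h2 : k * 1 ≤ δ 2 := by
        have := hle 2
        simpa [Pi.smul_apply] using this
      omega
    · rfl
  · intro h
    rw [Finset.mem_range] at h
    rw [if_neg]
    intro hle
    have h1 : δ 2 * 1 ≤ δ 1 := by
      have := hle 1
      simpa [Pi.smul_apply] using this
    omega

/-- closed form for `E(y_{α₃})E(y_{α₂+α₃})E(y_{α₂})`. -/
lemma L323 (δ : Fin 3 → ℕ) :
    mulQ QA3 (Edl ![0, 0, 1]) (mulQ QA3 (Edl ![0, 1, 1]) (Edl ![0, 1, 0])) δ =
    ∑ m ∈ Finset.range (δ 2 + 1),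
      if δ 0 = 0 ∧ δ 2 - m ≤ δ 1 then
        tq ^ ((m : ℤ) * (δ 1 : ℤ)) * (tq ^ (m ^ 2) * Pq m) *
          (tq ^ (((δ 2 - m : ℕ) : ℤ) * ((δ 1 - (δ 2 - m) : ℕ) : ℤ)) *
            ((tq ^ ((δ 2 - m) ^ 2) * Pq (δ 2 - m)) *
              (tq ^ ((δ 1 - (δ 2 - m)) ^ 2) * Pq (δ 1 - (δ 2 - m)))))
      else 0 := by
  rw [mulQ_Edl QA3 ![0, 0, 1] 2 rfl]
  apply Finset.sum_congr rfl
  intro m hm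
  rw [Finset.mem_range] at hm
  have hle : m • ![0, 0, 1] ≤ δ := by
    intro i
    fin_cases i <;> simp [Pi.smul_apply] <;> omega
  rw [if_pos hle, L232]
  have e0 : (δ - m • ![0, 0, 1] : Fin 3 → ℕ) 0 = δ 0 := by simp [Pi.sub_apply, Pi.smul_apply]
  have e1 : (δ - m • ![0, 0, 1] : Fin 3 → ℕ) 1 = δ 1 := by simp [Pi.sub_apply, Pi.smul_apply]
  have e2 : (δ - m • ![0, 0, 1] : Fin 3 → ℕ) 2 = δ 2 - m := by simp [Pi.sub_apply, Pi.smul_apply]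
  simp only [e0, e1, e2]
  by_cases hc : δ 0 = 0 ∧ δ 2 - m ≤ δ 1
  · rw [if_pos hc, if_pos hc]
    have hl : QA3.lam (Quiv.toZ (m • ![0, 0, 1])) (Quiv.toZ (δ - m • ![0, 0, 1]))
        = (m : ℤ) * (δ 1 : ℤ) := by
      rw [lam_QA3]
      simp only [toZ_apply, Pi.sub_apply, Pi.smul_apply, smul_eq_mul, cv0, cv1, cv2,
              mul_zero, mul_one, Nat.sub_zero, Nat.sub_self, Nat.cast_zero,
              show Matrix.vecHead δ = δ 0 from rfl,
              show Matrix.vecHead (Matrix.vecTail δ) = δ 1 from rfl,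
              show Matrix.vecHead (Matrix.vecTail (Matrix.vecTail δ)) = δ 2 from rfl]
      push_cast
      ring
    rw [hl]
  · rw [if_neg hc, if_neg hc, mul_zero]

/-- multiplying by `E(y_{α₁})` on the left. -/
lemma mulQ_E1 (g : AQ 3) (hg : ∀ δ, δ 0 ≠ 0 → g δ = 0) (γ : Fin 3 → ℕ) :
    mulQ QA3 (Edl ![1, 0, 0]) g γ =
      tq ^ (-((γ 0 : ℤ) * (γ 1 : ℤ))) * (tq ^ (γ 0 ^ 2) * Pq (γ 0)) *
        g (γ - γ 0 • ![1, 0, 0]) := by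
  rw [mulQ_Edl QA3 ![1, 0, 0] 0 rfl]
  rw [Finset.sum_eq_single (γ 0)]
  · rw [if_pos]
    · have hl : QA3.lam (Quiv.toZ (γ 0 • ![1, 0, 0])) (Quiv.toZ (γ - γ 0 • ![1, 0, 0]))
          = -((γ 0 : ℤ) * (γ 1 : ℤ)) := by
        rw [lam_QA3]
        simp only [toZ_apply, Pi.sub_apply, Pi.smul_apply, smul_eq_mul, cv0, cv1, cv2,
              mul_zero, mul_one, Nat.sub_zero, Nat.sub_self, Nat.cast_zero,
              show Matrix.vecHead γ = γ 0 from rfl,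
              show Matrix.vecHead (Matrix.vecTail γ) = γ 1 from rfl,
              show Matrix.vecHead (Matrix.vecTail (Matrix.vecTail γ)) = γ 2 from rfl]
        push_cast
        ring
      rw [hl]
    · intro i
      fin_cases i <;> simp [Pi.smul_apply]
  · intro k hk hne
    rw [Finset.mem_range] at hk
    split_ifs with hle
    · have hz : (γ - k • ![1, 0, 0] : Fin 3 → ℕ) 0 ≠ 0 := by
        simp only [Pi.sub_apply, Pi.smul_apply, smul_eq_mul, cv0, mul_one]
        omega
      rw [hg _ hz, mul_zero]
    · rfl
  · intro h
    exact absurd (Finset.mem_range.2 (by omega)) h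

/-- the scalar identity matching the `m`-sum. -/
lemma bridge (b c : ℕ) :
    (∑ m ∈ Finset.range (c + 1),
      if c - m ≤ b then
        tq ^ ((m : ℤ) * (b : ℤ)) * (tq ^ (m ^ 2) * Pq m) *
          (tq ^ (((c - m : ℕ) : ℤ) * ((b - (c - m) : ℕ) : ℤ)) *
            ((tq ^ ((c - m) ^ 2) * Pq (c - m)) *
              (tq ^ ((b - (c - m)) ^ 2) * Pq (b - (c - m)))))
      else 0)
    = tq ^ (-((b : ℤ) * (c : ℤ))) * ((tq ^ (b ^ 2) * Pq b) * (tq ^ (c ^ 2) * Pq c)) := by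
  rw [← Finset.sum_range_reflect]
  have hkey : tq ^ (-((b : ℤ) * (c : ℤ))) * ((tq ^ (b ^ 2) * Pq b) * (tq ^ (c ^ 2) * Pq c))
      = ∑ k ∈ Finset.range (c + 1),
          tq ^ (-((b : ℤ) * (c : ℤ))) * (tq ^ (b ^ 2) * tq ^ (c ^ 2)) *
            (if k ≤ b then tq ^ (2 * ((b - k) * (c - k))) * (Pq (b - k) * (Pq k * Pq (c - k)))
             else 0) := by
    rw [← Finset.mul_sum, key b c]
    ring
  rw [hkey]
  apply Finset.sum_congr rfl
  intro k hk
  rw [Finset.mem_range] at hk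
  have hr : c + 1 - 1 - k = c - k := by omega
  have hrr : c - (c - k) = k := by omega
  simp only [hr, hrr]
  by_cases hkb : k ≤ b
  · rw [if_pos hkb, if_pos hkb]
    obtain ⟨b', rfl⟩ : ∃ b', b = k + b' := ⟨b - k, by omega⟩
    obtain ⟨c', rfl⟩ : ∃ c', c = k + c' := ⟨c - k, by omega⟩
    simp only [show k + c' - k = c' by omega, show k + b' - k = b' by omega]
    simp only [← Nat.cast_mul, zpow_neg, zpow_natCast]
    rw [eq_comm, mul_assoc, inv_mul_eq_iff_eq_mul₀ (pow_ne_zero _ tq_ne_zero)]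
    ring
  · rw [if_neg hkb, if_neg hkb, mul_zero]

/-- In `Â_Q` for the equioriented `A₃` quiver,
`E(y_{α₁})E(y_{α₂})E(y_{α₃}) = E(y_{α₁})E(y_{α₃})E(y_{α₂+α₃})E(y_{α₂})`. -/
theorem statement8 :
    prodQ QA3 [Edl ![1, 0, 0], Edl ![0, 1, 0], Edl ![0, 0, 1]] =
      prodQ QA3 [Edl ![1, 0, 0], Edl ![0, 0, 1], Edl ![0, 1, 1], Edl ![0, 1, 0]] := by
  funext γ
  show mulQ QA3 (Edl ![1, 0, 0]) (mulQ QA3 (Edl ![0, 1, 0]) (mulQ QA3 (Edl ![0, 0, 1]) oneQ)) γ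
      = mulQ QA3 (Edl ![1, 0, 0])
          (mulQ QA3 (Edl ![0, 0, 1]) (mulQ QA3 (Edl ![0, 1, 1]) (mulQ QA3 (Edl ![0, 1, 0]) oneQ))) γ
  rw [mulQ_oneQ, mulQ_oneQ]
  rw [mulQ_E1 _ (fun δ h => by rw [L23, if_neg h]) γ,
      mulQ_E1 _ (fun δ h => by
        rw [L323]
        exact Finset.sum_eq_zero (fun m _ => by rw [if_neg (fun hc => h hc.1)])) γ]
  congr 1
  rw [L23, L323]
  have h0 : (γ - γ 0 • ![1, 0, 0] : Fin 3 → ℕ) 0 = 0 := by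
    simp only [Pi.sub_apply, Pi.smul_apply, smul_eq_mul, cv0, mul_one, Nat.sub_self]
  have h1 : (γ - γ 0 • ![1, 0, 0] : Fin 3 → ℕ) 1 = γ 1 := by
    simp only [Pi.sub_apply, Pi.smul_apply, smul_eq_mul, cv1, mul_zero, Nat.sub_zero]
  have h2 : (γ - γ 0 • ![1, 0, 0] : Fin 3 → ℕ) 2 = γ 2 := by
    simp only [Pi.sub_apply, Pi.smul_apply, smul_eq_mul, cv2, mul_zero, Nat.sub_zero]
  simp only [h0, h1, h2, eq_self_iff_true, true_and, if_true]
  exact (bridge (γ 1) (γ 2)).symm
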